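/- Let n be a positive integer, μ ∈ ℂ^n a generic vector, γ ∈ ℤ^n \ {0}, d_γ ∈ 𝔥 \ {0}, k ∈ ℤ and 1 ≤ i ≤ n. If the Lie bracket [t^γ d_γ, t_i^k d_μ] = 0 in the Witt algebra W_n, then γ = k·ε_i and d_γ = c·d_μ for some c ∈ ℂ^*; that is, t^γ d_γ = c·t_i^k d_μ. -/

import Mathlib

open scoped BigOperators

noncomputable section

/-- The Laurent polynomial algebra `ℂ[t₁^{±1},…,tₙ^{±1}]`, realized as the group
algebra of `ℤⁿ` over `ℂ`. -/
abbrev LaurentAlg (n : ℕ) : Type := AddMonoidAlgebra ℂ (Fin n → ℤ)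

/-- The Witt algebra `Wₙ = Der(ℂ[t₁^{±1},…,tₙ^{±1}])`. -/
abbrev WittAlg (n : ℕ) : Type := Derivation ℂ (LaurentAlg n) (LaurentAlg n)

/-- Pairing `(μ, β) ↦ ∑ μᵢ βᵢ`. -/
def dotp {n : ℕ} (μ : Fin n → ℂ) (β : Fin n → ℤ) : ℂ := ∑ i, μ i * (β i : ℂ)

lemma dotp_add {n : ℕ} (μ : Fin n → ℂ) (β γ : Fin n → ℤ) :
    dotp μ (β + γ) = dotp μ β + dotp μ γ := by
  simp [dotp, mul_add, Finset.sum_add_distrib]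

lemma dotp_zero {n : ℕ} (μ : Fin n → ℂ) : dotp μ 0 = 0 := by simp [dotp]

/-- A vector `μ ∈ ℂⁿ` is generic if `μ·α ≠ 0` for all nonzero `α ∈ ℤⁿ`. -/
def IsGeneric {n : ℕ} (μ : Fin n → ℂ) : Prop :=
  ∀ α : Fin n → ℤ, α ≠ 0 → dotp μ α ≠ 0

/-- Underlying linear map of `t^α d_μ`. -/
def wdAux {n : ℕ} (μ : Fin n → ℂ) (α : Fin n → ℤ) : LaurentAlg n →ₗ[ℂ] LaurentAlg n :=
  (Finsupp.lsum ℂ fun β => dotp μ β • AddMonoidAlgebra.lsingle (α + β)) ∘ₗ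
    (AddMonoidAlgebra.coeffLinearEquiv ℂ).toLinearMap

lemma wdAux_single {n : ℕ} (μ : Fin n → ℂ) (α β : Fin n → ℤ) (c : ℂ) :
    wdAux μ α (AddMonoidAlgebra.single β c) = dotp μ β • AddMonoidAlgebra.single (α + β) c := by
  classical
  simp [wdAux, AddMonoidAlgebra.coeffLinearEquiv, AddMonoidAlgebra.lsingle]

/-- The derivation `t^α d_μ` of the Laurent polynomial algebra, sending
`t^β ↦ (μ·β) t^{α+β}`.  In particular `wd μ 0 = d_μ` and
`wd (Pi.single i 1) α = t^α dᵢ`. -/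
def wd {n : ℕ} (μ : Fin n → ℂ) (α : Fin n → ℤ) : WittAlg n where
  toLinearMap := wdAux μ α
  map_one_eq_zero' := by
    rw [show (1 : LaurentAlg n) = AddMonoidAlgebra.single 0 1 from rfl, wdAux_single, dotp_zero,
      zero_smul]
  leibniz' := by
    intro a b
    show wdAux μ α (a * b) = a • wdAux μ α b + b • wdAux μ α a
    induction a using AddMonoidAlgebra.induction_linear with
    | zero => simp
    | add f g hf hg =>
        rw [add_mul, map_add, hf, hg, map_add]
        simp only [smul_eq_mul, add_mul, mul_add]
        ring
    | single β c =>
      induction b using AddMonoidAlgebra.induction_linear with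
      | zero => simp
      | add f g hf hg =>
          rw [mul_add, map_add, hf, hg, map_add]
          simp only [smul_eq_mul, add_mul, mul_add]
          ring
      | single γ d =>
          show wdAux μ α (AddMonoidAlgebra.single β c * AddMonoidAlgebra.single γ d) =
            AddMonoidAlgebra.single β c • wdAux μ α (AddMonoidAlgebra.single γ d)
            + AddMonoidAlgebra.single γ d • wdAux μ α (AddMonoidAlgebra.single β c)
          rw [AddMonoidAlgebra.single_mul_single, wdAux_single, wdAux_single, wdAux_single,
            smul_eq_mul, smul_eq_mul, mul_smul_comm, mul_smul_comm,
            AddMonoidAlgebra.single_mul_single, AddMonoidAlgebra.single_mul_single,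
            dotp_add, add_smul]
          rw [show β + (α + γ) = α + (β + γ) by abel, show γ + (α + β) = α + (β + γ) by abel,
            mul_comm d c, add_comm]

/-- A linear map `Δ` on a Lie algebra `L` is a local derivation if for each `x`
there is a Lie algebra derivation `Dₓ` with `Δ x = Dₓ x`. -/
def IsLocalDerivation {L : Type*} [LieRing L] [LieAlgebra ℂ L] (Δ : L →ₗ[ℂ] L) : Prop :=
  ∀ x : L, ∃ D : LieDerivation ℂ L L, Δ x = D x

end

section Aux

lemma dotp_smul {n : ℕ} (a : ℂ) (μ : Fin n → ℂ) (β : Fin n → ℤ) :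
    dotp (a • μ) β = a * dotp μ β := by
  simp [dotp, Finset.mul_sum, mul_assoc]

lemma dotp_single_one {n : ℕ} (μ : Fin n → ℂ) (j : Fin n) :
    dotp μ (Pi.single j 1) = μ j := by
  simp [dotp, Pi.single_apply]

lemma dotp_sub {n : ℕ} (μ : Fin n → ℂ) (β γ : Fin n → ℤ) :
    dotp μ (β - γ) = dotp μ β - dotp μ γ := by
  simp [dotp, mul_sub, Finset.sum_sub_distrib]

lemma wd_single {n : ℕ} (μ : Fin n → ℂ) (α β : Fin n → ℤ) (a : ℂ) :
    wd μ α (AddMonoidAlgebra.single β a) = dotp μ β • AddMonoidAlgebra.single (α + β) a :=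
  wdAux_single μ α β a

lemma wd_zero {n : ℕ} (α : Fin n → ℤ) : wd (0 : Fin n → ℂ) α = 0 := by
  apply Derivation.ext
  intro x
  show wdAux 0 α x = 0
  induction x using AddMonoidAlgebra.induction_linear with
  | zero => simp
  | add f g hf hg => rw [map_add, hf, hg, add_zero]
  | single β a =>
      rw [wdAux_single]
      simp [dotp]

lemma wd_smul {n : ℕ} (a : ℂ) (μ : Fin n → ℂ) (α : Fin n → ℤ) :
    wd (a • μ) α = a • wd μ α := by
  apply Derivation.ext
  intro x
  show wdAux (a • μ) α x = a • wdAux μ α x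
  induction x using AddMonoidAlgebra.induction_linear with
  | zero => simp
  | add f g hf hg => rw [map_add, hf, hg, map_add, smul_add]
  | single β b => rw [wdAux_single, wdAux_single, dotp_smul, smul_smul]

end Aux

/-- Let `μ` be generic, `γ ∈ ℤⁿ \ {0}`, `d_γ ∈ 𝔥 \ {0}` (encoded by a
coefficient vector `c` with `wd c 0 ≠ 0`), `k ∈ ℤ` and `i`. If `[t^γ d_γ, tᵢ^k d_μ] = 0`
in `Wₙ`, then `γ = k·εᵢ` and `t^γ d_γ = c'·tᵢ^k d_μ` for some nonzero scalar `c'`. -/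
theorem bracket_vanishing_forces_proportionality (n : ℕ) (hn : 0 < n)
    (μ : Fin n → ℂ) (hμ : IsGeneric μ)
    (γ : Fin n → ℤ) (hγ : γ ≠ 0) (c : Fin n → ℂ) (hc : wd c 0 ≠ 0)
    (k : ℤ) (i : Fin n)
    (hbr : ⁅wd c γ, wd μ (Pi.single i k)⁆ = 0) :
    γ = Pi.single i k ∧ ∃ c' : ℂ, c' ≠ 0 ∧ wd c γ = c' • wd μ (Pi.single i k) := by
  classical
  set α : Fin n → ℤ := Pi.single i k with hα
  have key : ∀ β : Fin n → ℤ, dotp μ β * dotp c (α + β) = dotp c β * dotp μ (γ + β) := by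
    intro β
    have h := congrArg (fun D : WittAlg n => D (AddMonoidAlgebra.single β (1 : ℂ))) hbr
    simp only [Derivation.commutator_apply, Derivation.zero_apply] at h
    rw [wd_single, Derivation.map_smul, wd_single, wd_single, Derivation.map_smul, wd_single,
      smul_smul, smul_smul, show γ + (α + β) = α + (γ + β) by abel,
      sub_eq_zero, AddMonoidAlgebra.smul_single', AddMonoidAlgebra.smul_single'] at h
    have h2 := AddMonoidAlgebra.single_right_injective (m := α + (γ + β)) h
    simpa using h2
  set P := dotp c α with hP
  set Q := dotp μ γ with hQdef
  have hQ : Q ≠ 0 := hμ γ hγ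
  have hcne : c ≠ 0 := by
    intro h
    rw [h] at hc
    exact hc (wd_zero 0)
  have hprop : ∀ j, μ j * P = c j * Q := by
    intro j
    have h := key (Pi.single j 1)
    rw [dotp_add, dotp_add, dotp_single_one, dotp_single_one] at h
    ring_nf at h ⊢
    linear_combination h
  have hcμ : c = (P / Q) • μ := by
    funext j
    have h := hprop j
    simp only [Pi.smul_apply, smul_eq_mul]
    field_simp
    linear_combination -h
  have hlam : P / Q ≠ 0 := by
    intro h
    rw [h, zero_smul] at hcμ
    exact hcne hcμ
  have hPne : P ≠ 0 := by
    intro h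
    exact hlam (by rw [h, zero_div])
  have hQα : dotp μ α = Q := by
    have h : P = (P / Q) * dotp μ α := by
      conv_lhs => rw [hP, hcμ, dotp_smul]
    field_simp at h
    exact h.symm
  have hγα : γ = α := by
    have h0 : γ - α = 0 := by
      by_contra h
      exact hμ (γ - α) h (by rw [dotp_sub, hQα]; ring)
    have := sub_eq_zero.mp h0
    exact this
  refine ⟨hγα, P / Q, hlam, ?_⟩
  rw [hγα, hcμ, wd_smul]
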